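/- The set of recurrent labels is a dense Gδ subset of the space of labels 𝓛𝓐𝓑. -/

import Mathlib

/-- A label: a hereditary set of ℕ-vectors (finitely supported functions `ℕ → ℕ`). -/
def IsLabel (M : Set (ℕ →₀ ℕ)) : Prop :=
  ∀ m₁ m : ℕ →₀ ℕ, m₁ ≤ m → m ∈ M → m₁ ∈ M

/-- `𝓜 − r = {w : w + r ∈ 𝓜}`. -/
def Msub (M : Set (ℕ →₀ ℕ)) (r : ℕ →₀ ℕ) : Set (ℕ →₀ ℕ) := {w | w + r ∈ M}

/-- The indicator function of a set of ℕ-vectors, valued in the (discrete) two-point space. -/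
noncomputable def labelInd (M : Set (ℕ →₀ ℕ)) : (ℕ →₀ ℕ) → Bool :=
  fun m => @decide (m ∈ M) (Classical.propDecidable _)

/-- The topology of the space of labels `𝓛𝓐𝓑`: the subspace topology induced from the
product topology on the power set of the set of ℕ-vectors (equivalently, the topology of the
ultrametric `d(𝓜₁,𝓜₂) = inf {2^{−N} : 𝓜₁ ∩ 𝓑_N = 𝓜₂ ∩ 𝓑_N}`). -/
noncomputable def labTop : TopologicalSpace (Set (ℕ →₀ ℕ)) :=
  TopologicalSpace.induced labelInd inferInstance

/-- A label `𝓜` is recurrent if it lies in the closure of `{𝓜 − r : r > 0}`. -/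
def RecurrentLabel (M : Set (ℕ →₀ ℕ)) : Prop :=
  M ∈ @closure _ labTop {M' : Set (ℕ →₀ ℕ) | ∃ r : ℕ →₀ ℕ, 0 < r ∧ M' = Msub M r}

/-- The space of labels, with its subspace topology. -/
def Lab : Type := {M : Set (ℕ →₀ ℕ) // IsLabel M}

noncomputable def labTopL : TopologicalSpace Lab :=
  TopologicalSpace.induced (Subtype.val : Lab → Set (ℕ →₀ ℕ)) labTop

-- auxiliary lemmas


lemma labelInd_eq_iff (M M' : Set (ℕ →₀ ℕ)) (a b : ℕ →₀ ℕ) :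
    labelInd M a = labelInd M' b ↔ (a ∈ M ↔ b ∈ M') := by
  unfold labelInd
  exact decide_eq_decide

lemma agree_mem_open {V : Set ((ℕ →₀ ℕ) → Bool)} (hV : IsOpen V)
    {f : (ℕ →₀ ℕ) → Bool} (hf : f ∈ V) :
    ∃ F : Finset (ℕ →₀ ℕ), ∀ g, (∀ w ∈ F, g w = f w) → g ∈ V := by
  obtain ⟨I, u, hIu, hsub⟩ := isOpen_pi_iff.mp hV f hf
  exact ⟨I, fun g hg => hsub fun w hw => (hg w hw) ▸ (hIu w hw).2⟩

lemma rec_iff (M : Set (ℕ →₀ ℕ)) :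
    RecurrentLabel M ↔
      ∀ F : Finset (ℕ →₀ ℕ), ∃ r : ℕ →₀ ℕ, 0 < r ∧ ∀ w ∈ F, (w + r ∈ M ↔ w ∈ M) := by
  letI := labTop
  have hind : labTop = TopologicalSpace.induced labelInd inferInstance := rfl
  constructor
  · intro h F
    have hU : IsOpen {M' : Set (ℕ →₀ ℕ) | ∀ w ∈ F, labelInd M' w = labelInd M w} := by
      have he : {M' : Set (ℕ →₀ ℕ) | ∀ w ∈ F, labelInd M' w = labelInd M w} =
          labelInd ⁻¹' ((↑F : Set (ℕ →₀ ℕ)).pi (fun w => {labelInd M w})) := by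
        ext M'; simp [Set.mem_pi]
      rw [he]
      exact (isOpen_set_pi F.finite_toSet (fun _ _ => isOpen_discrete _)).preimage
        continuous_induced_dom
    obtain ⟨M', hM'U, r, hr, hMr⟩ := mem_closure_iff.mp h _ hU
      (fun w _ => rfl)
    refine ⟨r, hr, fun w hw => ?_⟩
    have := hM'U w hw
    rw [hMr] at this
    exact (labelInd_eq_iff _ _ _ _).mp this
  · intro h
    rw [RecurrentLabel, mem_closure_iff]
    intro o ho hMo
    rw [hind, isOpen_induced_iff] at ho
    obtain ⟨V, hV, rfl⟩ := ho
    obtain ⟨F, hF⟩ := agree_mem_open hV hMo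
    obtain ⟨r, hr, hagree⟩ := h F
    refine ⟨Msub M r, hF _ fun w hw => ?_, r, hr, rfl⟩
    exact (labelInd_eq_iff _ _ _ _).mpr (hagree w hw)

theorem stmt10 :
    @Dense Lab labTopL {p : Lab | RecurrentLabel p.1} ∧
    @IsGδ Lab labTopL {p : Lab | RecurrentLabel p.1} := by
  letI : TopologicalSpace (Set (ℕ →₀ ℕ)) := labTop
  letI : TopologicalSpace Lab := labTopL
  have hind : labTopL = TopologicalSpace.induced
      (fun p : Lab => labelInd p.1) inferInstance := by
    rw [labTopL, labTop]; exact induced_compose (f := (Subtype.val : Lab → Set (ℕ →₀ ℕ))) (g := labelInd)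
  constructor
  · -- density
    intro p
    rw [mem_closure_iff]
    intro o ho hpo
    rw [hind, isOpen_induced_iff] at ho
    obtain ⟨V, hV, rfl⟩ := ho
    obtain ⟨F, hF⟩ := agree_mem_open hV hpo
    obtain ⟨ℓ, hℓ⟩ := Infinite.exists_notMem_finset (F.sup Finsupp.support)
    classical
    set M' : Set (ℕ →₀ ℕ) := {w | w.update ℓ 0 ∈ p.1} with hM'
    have hlbl : IsLabel M' := by
      intro m₁ m hle hm
      refine p.2 _ _ ?_ hm
      rw [Finsupp.le_def] at hle ⊢
      intro i
      rcases eq_or_ne i ℓ with rfl | hne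
      · simp [Finsupp.coe_update]
      · simpa [Finsupp.coe_update, Function.update_apply, hne] using hle i
    have hfix : Msub M' (Finsupp.single ℓ 1) = M' := by
      ext w
      have : (w + Finsupp.single ℓ 1).update ℓ 0 = w.update ℓ 0 := by
        ext i
        rcases eq_or_ne i ℓ with rfl | hne
        · simp [Finsupp.coe_update]
        · simp [Finsupp.coe_update, Function.update_apply, hne, Finsupp.single_apply,
            (Ne.symm hne)]
      simp only [Msub, Set.mem_setOf_eq, hM', this]
    have hrec : RecurrentLabel M' := by
      apply subset_closure
      refine ⟨Finsupp.single ℓ 1, ?_, hfix.symm⟩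
      rw [pos_iff_ne_zero]
      simp [Finsupp.single_eq_zero]
    refine ⟨⟨M', hlbl⟩, hF _ fun w hw => ?_, hrec⟩
    have hwl : w ℓ = 0 := by
      by_contra h
      exact hℓ (Finset.mem_of_subset (Finset.le_sup (f := Finsupp.support) hw)
        (Finsupp.mem_support_iff.mpr h))
    have : w.update ℓ 0 = w := by
      conv_lhs => rw [← hwl]
      exact Finsupp.update_self w ℓ
    refine (labelInd_eq_iff _ _ _ _).mpr ?_
    simp only [hM', Set.mem_setOf_eq, this]
  · -- Gδ
    have heq : {p : Lab | RecurrentLabel p.1} =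
        ⋂ F : Finset (ℕ →₀ ℕ),
          {p : Lab | ∃ r : ℕ →₀ ℕ, 0 < r ∧ ∀ w ∈ F, (w + r ∈ p.1 ↔ w ∈ p.1)} := by
      ext p
      simp only [Set.mem_setOf_eq, Set.mem_iInter, rec_iff]
    rw [heq]
    refine IsGδ.iInter fun F => IsOpen.isGδ ?_
    have : {p : Lab | ∃ r : ℕ →₀ ℕ, 0 < r ∧ ∀ w ∈ F, (w + r ∈ p.1 ↔ w ∈ p.1)} =
        ⋃ r ∈ {r : ℕ →₀ ℕ | 0 < r},
          {p : Lab | ∀ w ∈ F, (w + r ∈ p.1 ↔ w ∈ p.1)} := by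
      ext p; simp [Set.mem_setOf_eq]
    rw [this]
    refine isOpen_biUnion fun r _ => ?_
    have hcont : Continuous (fun p : Lab => labelInd p.1) :=
      continuous_iff_le_induced.mpr (le_of_eq hind)
    have hVopen : IsOpen (⋂ w ∈ F, {g : (ℕ →₀ ℕ) → Bool | g (w + r) = g w}) := by
      refine isOpen_biInter_finset fun w _ => ?_
      have hc : Continuous (fun g : (ℕ →₀ ℕ) → Bool => (g (w + r), g w)) :=
        (continuous_apply _).prodMk (continuous_apply _)
      exact hc.isOpen_preimage {q | q.1 = q.2} (isOpen_discrete _)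
    have he : {p : Lab | ∀ w ∈ F, (w + r ∈ p.1 ↔ w ∈ p.1)} =
        (fun p : Lab => labelInd p.1) ⁻¹' (⋂ w ∈ F, {g : (ℕ →₀ ℕ) → Bool | g (w + r) = g w}) := by
      ext p
      simp only [Set.mem_preimage, Set.mem_iInter, Set.mem_setOf_eq, labelInd_eq_iff]
    rw [he]
    exact hVopen.preimage hcont
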